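/- For a six-qubit pure singlet state |ψ⟩ = Σ_i t_i|i⟩ ∈ (ℂ²)^{⊗6} (so each nonzero coefficient's multi-index contains exactly three 0's and three 1's), if all two-qubit marginals were maximally mixed then Σ over all pairs {α,β} of [⟨00|ρ_{αβ}|00⟩ + ⟨11|ρ_{αβ}|11⟩] = 2·C(3,2)·Σ_i|t_i|² = 6 would equal (1/4)·2·C(6,2) = 15/2, contradicting normalization Σ_i|t_i|² = 1. Hence no six-qubit singlet state is 2-uniform. -/

import Mathlib

open scoped BigOperators ComplexConjugate

/-- The action of `U^{⊗n}` on the coefficient vector of a state in `(ℂ^d)^{⊗n}`. -/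
noncomputable def tensorAction {d n : ℕ} (U : Matrix (Fin d) (Fin d) ℂ)
    (t : (Fin n → Fin d) → ℂ) : (Fin n → Fin d) → ℂ :=
  fun i => ∑ j : Fin n → Fin d, (∏ α : Fin n, U (i α) (j α)) * t j

/-- The two-particle reduced density matrix of particles `α ≠ β`. -/
noncomputable def rho2 {d n : ℕ} (t : (Fin n → Fin d) → ℂ) (α β : Fin n)
    (a₁ a₂ b₁ b₂ : Fin d) : ℂ :=
  ∑ i : Fin n → Fin d,
    if i α = a₁ ∧ i β = a₂ then
      t i * conj (t (Function.update (Function.update i α b₁) β b₂))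
    else 0

/-! ### Auxiliary definitions and lemmas -/

/-- Number of zeros in a multi-index. -/
def zer (i : Fin 6 → Fin 2) : ℕ := (Finset.univ.filter (fun α => i α = 0)).card

def flipv : Fin 2 → Fin 2 := ![1, 0]

/-- Weight: number of aligned pairs. -/
def wgt (i : Fin 6 → Fin 2) : ℕ :=
  ∑ α : Fin 6, ∑ β : Fin 6, if α < β then
    ((if i α = 0 ∧ i β = 0 then 1 else 0) + (if i α = 1 ∧ i β = 1 then 1 else 0)) else 0

lemma wgt_eq_six : ∀ i : Fin 6 → Fin 2, zer i = 3 → wgt i = 6 := by decide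

lemma zer_lt_seven (i : Fin 6 → Fin 2) : zer i < 7 :=
  lt_of_le_of_lt (Finset.card_filter_le _ _) (by simp)

lemma zer_flip (i : Fin 6 → Fin 2) : zer (flipv ∘ i) + zer i = 6 := by
  revert i; decide

lemma flipv_flip_flip (i : Fin 6 → Fin 2) : flipv ∘ (flipv ∘ i) = i := by
  funext α
  have h : ∀ a : Fin 2, flipv (flipv a) = a := by decide
  simp [Function.comp, h]

lemma tensorAction_diagonal (v : Fin 2 → ℂ) (t : (Fin 6 → Fin 2) → ℂ) (i : Fin 6 → Fin 2) :
    tensorAction (Matrix.diagonal v) t i = (∏ α, v (i α)) * t i := by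
  unfold tensorAction
  rw [Finset.sum_eq_single i]
  · simp [Matrix.diagonal_apply_eq]
  · intro j _ hj
    obtain ⟨α, hα⟩ := Function.ne_iff.mp hj
    rw [Finset.prod_eq_zero (Finset.mem_univ α) (Matrix.diagonal_apply_ne v (Ne.symm hα)),
      zero_mul]
  · simp

lemma tensorAction_X (t : (Fin 6 → Fin 2) → ℂ) (i : Fin 6 → Fin 2) :
    tensorAction !![(0:ℂ),1;1,0] t i = t (flipv ∘ i) := by
  have hent : ∀ a b : Fin 2, (!![(0:ℂ),1;1,0]) a b = if b = flipv a then 1 else 0 := by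
    intro a b; fin_cases a <;> fin_cases b <;> simp [flipv]
  unfold tensorAction
  rw [Finset.sum_eq_single (flipv ∘ i)]
  · simp [hent]
  · intro j _ hj
    obtain ⟨α, hα⟩ := Function.ne_iff.mp hj
    rw [Finset.prod_eq_zero (Finset.mem_univ α) (by rw [hent]; exact if_neg hα), zero_mul]
  · simp

lemma X_mem_unitary : (!![(0:ℂ),1;1,0]) ∈ Matrix.unitaryGroup (Fin 2) ℂ := by
  rw [Matrix.mem_unitaryGroup_iff]
  have hstar : star (!![(0:ℂ),1;1,0]) = !![(0:ℂ),1;1,0] := by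
    ext a b
    fin_cases a <;> fin_cases b <;>
      simp [Matrix.star_apply]
  rw [hstar]
  ext a b
  fin_cases a <;> fin_cases b <;>
    simp [Matrix.mul_apply, Fin.sum_univ_two, Matrix.one_apply]

/-- Support of a singlet state consists of balanced indices. -/
lemma support_balanced (t : (Fin 6 → Fin 2) → ℂ) (ht : t ≠ 0)
    (hsinglet : ∀ U ∈ Matrix.unitaryGroup (Fin 2) ℂ, ∃ c : ℂ, tensorAction U t = c • t) :
    ∀ i, t i ≠ 0 → zer i = 3 := by
  obtain ⟨i0, hi0⟩ : ∃ a, t a ≠ 0 := by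
    by_contra h; push_neg at h; exact ht (funext fun a => h a)
  set z : ℂ := Complex.exp (2 * ↑Real.pi * Complex.I / (7:ℕ)) with hz
  have hprim : IsPrimitiveRoot z 7 := Complex.isPrimitiveRoot_exp 7 (by norm_num)
  have habs : ‖z‖ = 1 := by
    have h7 : (2 * ↑Real.pi * Complex.I / ((7:ℕ):ℂ)) = ((2 * Real.pi / 7 : ℝ) : ℂ) * Complex.I := by
      push_cast; ring
    rw [hz, h7, Complex.norm_exp_ofReal_mul_I]
  have hzconj : z * conj z = 1 := by
    rw [Complex.mul_conj, Complex.normSq_eq_norm_sq, habs]; norm_num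
  set v : Fin 2 → ℂ := ![z, 1] with hv
  have hva : ∀ a : Fin 2, v a = if a = 0 then z else 1 := by
    intro a; fin_cases a <;> simp [hv]
  have hUmem : Matrix.diagonal v ∈ Matrix.unitaryGroup (Fin 2) ℂ := by
    rw [Matrix.mem_unitaryGroup_iff, Matrix.star_eq_conjTranspose,
      Matrix.diagonal_conjTranspose, Matrix.diagonal_mul_diagonal]
    have hfun : (fun a => v a * (star v) a) = (1 : Fin 2 → ℂ) := by
      funext a; fin_cases a <;> simp [hv, hzconj]
    rw [hfun]; exact Matrix.diagonal_one
  have hprod : ∀ i : Fin 6 → Fin 2, (∏ α, v (i α)) = z ^ zer i := by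
    intro i
    calc (∏ α, v (i α)) = ∏ α, if i α = 0 then z else 1 := by
          simp only [hva]
      _ = ∏ α ∈ Finset.univ.filter (fun α => i α = 0), z := (Finset.prod_filter _ _).symm
      _ = z ^ zer i := by rw [Finset.prod_const]; rfl
  obtain ⟨c, hc⟩ := hsinglet _ hUmem
  have hdiag : ∀ i, t i ≠ 0 → z ^ zer i = c := by
    intro i hi
    have h := congrFun hc i
    rw [tensorAction_diagonal, hprod] at h
    simp only [Pi.smul_apply, smul_eq_mul] at h
    exact mul_right_cancel₀ hi h
  have hsame : ∀ i, t i ≠ 0 → zer i = zer i0 := fun i hi =>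
    hprim.pow_inj (zer_lt_seven i) (zer_lt_seven i0)
      ((hdiag i hi).trans (hdiag i0 hi0).symm)
  obtain ⟨cx, hcx⟩ := hsinglet _ X_mem_unitary
  have hflip : ∀ i, t (flipv ∘ i) = cx * t i := by
    intro i
    have h := congrFun hcx i
    rw [tensorAction_X] at h
    simpa using h
  have h1 := hflip i0
  have h2 := hflip (flipv ∘ i0)
  rw [flipv_flip_flip, h1] at h2
  have hone : cx * cx = 1 := by
    have h3 : (cx * cx) * t i0 = 1 * t i0 := by rw [one_mul, mul_assoc]; exact h2.symm
    exact mul_right_cancel₀ hi0 h3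
  have hcxne : cx ≠ 0 := by
    intro h; rw [h, mul_zero] at hone; exact one_ne_zero hone.symm
  have hfi0 : t (flipv ∘ i0) ≠ 0 := by
    rw [h1]; exact mul_ne_zero hcxne hi0
  have h30 : zer i0 = 3 := by
    have := hsame _ hfi0
    have := zer_flip i0
    omega
  intro i hi
  rw [hsame i hi, h30]

lemma rho2_diag (t : (Fin 6 → Fin 2) → ℂ) (α β : Fin 6) (a : Fin 2) :
    rho2 t α β a a a a = ∑ i : Fin 6 → Fin 2,
      if i α = a ∧ i β = a then (Complex.normSq (t i) : ℂ) else 0 := by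
  unfold rho2
  refine Finset.sum_congr rfl fun i _ => ?_
  split_ifs with h
  · obtain ⟨h1, h2⟩ := h
    have e1 : Function.update i α a = i := by rw [← h1, Function.update_eq_self]
    have e2 : Function.update i β a = i := by rw [← h2, Function.update_eq_self]
    rw [e1, e2, Complex.mul_conj]
  · rfl

/-- For a normalized six-qubit pure singlet state, the sum over all qubit pairs of the
diagonal marginal entries `⟨00|ρ_{αβ}|00⟩ + ⟨11|ρ_{αβ}|11⟩` equals
`2·C(3,2)·∑|tᵢ|² = 6`, whereas 2-uniformity would require it to be
`(1/4)·2·C(6,2) = 15/2`; hence no six-qubit singlet state is 2-uniform. -/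
theorem stmt_13 (t : (Fin 6 → Fin 2) → ℂ) (ht : t ≠ 0)
    (hnorm : ∑ i : Fin 6 → Fin 2, Complex.normSq (t i) = 1)
    (hsinglet : ∀ U ∈ Matrix.unitaryGroup (Fin 2) ℂ, ∃ c : ℂ, tensorAction U t = c • t) :
    (∑ α : Fin 6, ∑ β : Fin 6,
      (if α < β then rho2 t α β 0 0 0 0 + rho2 t α β 1 1 1 1 else 0)) = (6 : ℂ) ∧
    ¬ (∀ α β : Fin 6, α ≠ β → ∀ a₁ a₂ b₁ b₂ : Fin 2,
        rho2 t α β a₁ a₂ b₁ b₂ =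
          if a₁ = b₁ ∧ a₂ = b₂ then (1 / 4 : ℂ) else 0) := by
  have hbal := support_balanced t ht hsinglet
  set F : Fin 6 → Fin 6 → (Fin 6 → Fin 2) → ℂ := fun α β i =>
    (if α < β then (((if i α = 0 ∧ i β = 0 then 1 else 0)
      + (if i α = 1 ∧ i β = 1 then 1 else 0) : ℕ) : ℂ) else 0) * Complex.normSq (t i)
    with hF
  have step : ∀ α β : Fin 6,
      (if α < β then rho2 t α β 0 0 0 0 + rho2 t α β 1 1 1 1 else 0)
      = ∑ i : Fin 6 → Fin 2, F α β i := by
    intro α β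
    rw [rho2_diag, rho2_diag, ← Finset.sum_add_distrib, hF]
    split_ifs with h
    · refine Finset.sum_congr rfl fun i _ => ?_
      simp only [if_pos h]
      split_ifs <;> push_cast <;> ring
    · simp [if_neg h]
  have key : (∑ α : Fin 6, ∑ β : Fin 6,
      (if α < β then rho2 t α β 0 0 0 0 + rho2 t α β 1 1 1 1 else 0)) = (6 : ℂ) := by
    calc (∑ α : Fin 6, ∑ β : Fin 6,
          (if α < β then rho2 t α β 0 0 0 0 + rho2 t α β 1 1 1 1 else 0))
        = ∑ α : Fin 6, ∑ β : Fin 6, ∑ i : Fin 6 → Fin 2, F α β i := by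
          exact Finset.sum_congr rfl fun α _ => Finset.sum_congr rfl fun β _ => step α β
      _ = ∑ α : Fin 6, ∑ i : Fin 6 → Fin 2, ∑ β : Fin 6, F α β i :=
          Finset.sum_congr rfl fun α _ => Finset.sum_comm
      _ = ∑ i : Fin 6 → Fin 2, ∑ α : Fin 6, ∑ β : Fin 6, F α β i := Finset.sum_comm
      _ = ∑ i : Fin 6 → Fin 2, ((wgt i : ℂ)) * Complex.normSq (t i) := by
          refine Finset.sum_congr rfl fun i _ => ?_
          rw [hF]
          simp only [← Finset.sum_mul]
          congr 1
          rw [wgt]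
          push_cast [apply_ite (Nat.cast : ℕ → ℂ)]
          ring_nf
      _ = ∑ i : Fin 6 → Fin 2, (6 : ℂ) * Complex.normSq (t i) := by
          refine Finset.sum_congr rfl fun i _ => ?_
          by_cases hti : t i = 0
          · simp [hti]
          · rw [wgt_eq_six i (hbal i hti)]; norm_num
      _ = (6 : ℂ) := by
          rw [← Finset.mul_sum]
          have : (∑ i : Fin 6 → Fin 2, (Complex.normSq (t i) : ℂ)) = 1 := by
            rw [← Complex.ofReal_sum, hnorm, Complex.ofReal_one]
          rw [this, mul_one]
  refine ⟨key, fun h2 => ?_⟩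
  have heval : (∑ α : Fin 6, ∑ β : Fin 6,
      (if α < β then rho2 t α β 0 0 0 0 + rho2 t α β 1 1 1 1 else 0))
      = ∑ α : Fin 6, ∑ β : Fin 6, (if α < β then (1/2 : ℂ) else 0) := by
    refine Finset.sum_congr rfl fun α _ => Finset.sum_congr rfl fun β _ => ?_
    split_ifs with hab
    · rw [h2 α β (ne_of_lt hab) 0 0 0 0, h2 α β (ne_of_lt hab) 1 1 1 1]
      norm_num
    · rfl
  rw [key] at heval
  have : (∑ α : Fin 6, ∑ β : Fin 6, (if α < β then (1/2 : ℂ) else 0)) = 15/2 := by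
    have hcount : ∀ α : Fin 6, (∑ β : Fin 6, (if α < β then (1/2 : ℂ) else 0))
        = ((Finset.univ.filter (fun β => α < β)).card : ℂ) * (1/2) := by
      intro α
      rw [Finset.sum_ite, Finset.sum_const, Finset.sum_const]
      simp [mul_comm]
    simp only [hcount]
    rw [Fin.sum_univ_six]
    have c0 : (Finset.univ.filter (fun β : Fin 6 => 0 < β)).card = 5 := by decide
    have c1 : (Finset.univ.filter (fun β : Fin 6 => 1 < β)).card = 4 := by decide
    have c2 : (Finset.univ.filter (fun β : Fin 6 => 2 < β)).card = 3 := by decide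
    have c3 : (Finset.univ.filter (fun β : Fin 6 => 3 < β)).card = 2 := by decide
    have c4 : (Finset.univ.filter (fun β : Fin 6 => 4 < β)).card = 1 := by decide
    have c5 : (Finset.univ.filter (fun β : Fin 6 => 5 < β)).card = 0 := by decide
    rw [c0, c1, c2, c3, c4, c5]
    norm_num
  rw [this] at heval
  norm_num at heval
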